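/- Every broken line is isomorphic (via an ℝ-equivariant homeomorphism) to a concatenation of finitely many copies of the extended real line [-∞,∞] with its translation action. In particular, for a broken line L, the set of connected components of the non-fixed locus L \ L^ℝ is finite and nonempty. -/

import Mathlib

/-- The model for the concatenation of `n` copies of the extended real line
`[-∞,∞]` glued end to end: a point is a tuple `β : Fin n → EReal` such that
whenever `i < j` and `β j ≠ -∞`, then `β i = ∞`.  The `ℝ`-action is given by
translation in each coordinate. -/
def ConcatModel (n : ℕ) : Set (Fin n → EReal) :=
  {β | ∀ i j : Fin n, i < j → β j ≠ ⊥ → β i = ⊤}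

open Set Filter Topology

lemma brokenLine_aux (φ : ℝ → unitInterval → unitInterval)
    (hc : Continuous fun p : ℝ × unitInterval => φ p.1 p.2)
    (h0 : ∀ a, φ 0 a = a)
    (hA : ∀ s t a, φ (s + t) a = φ s (φ t a))
    (hm : ∀ (a : unitInterval) (t : ℝ), 0 ≤ t → a ≤ φ t a)
    (hfin : {a : unitInterval | ∀ t, φ t a = a}.Finite) :
    ∃ (n : ℕ) (_ : 0 < n) (e : unitInterval ≃ₜ ConcatModel n),
      (∀ (t : ℝ) (a : unitInterval) (i : Fin n),
        ((e (φ t a)) : Fin n → EReal) i = ((e a) : Fin n → EReal) i + (t : EReal)) ∧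
      ∃ U : Fin n → Set unitInterval,
        (∀ k, IsPreconnected (U k)) ∧ (∀ k, (U k).Nonempty) ∧
        (∀ k a, a ∈ U k → ¬ ∀ t, φ t a = a) ∧
        (∀ a : unitInterval, (¬ ∀ t, φ t a = a) → ∃ k, a ∈ U k) := by
  classical
  set Fs : Set unitInterval := {a | ∀ t, φ t a = a} with hFs
  -- basic flow algebra
  have hinv : ∀ (t : ℝ) (a), φ (-t) (φ t a) = a := by
    intro t a; rw [← hA]; simp [h0]
  have hinv' : ∀ (t : ℝ) (a), φ t (φ (-t) a) = a := by
    intro t a; rw [← hA]; simp [h0]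
  have htmono : ∀ (a) (s t : ℝ), s ≤ t → φ s a ≤ φ t a := by
    intro a s t hst
    have := hm (φ s a) (t - s) (by linarith)
    rwa [← hA, sub_add_cancel] at this
  have hco : ∀ a, Continuous fun t : ℝ => φ t a := by
    intro a
    exact hc.comp (continuous_id.prodMk continuous_const)
  have hcoR : ∀ a, Continuous fun t : ℝ => ((φ t a : unitInterval) : ℝ) := fun a =>
    continuous_subtype_val.comp (hco a)
  have hcs : ∀ t : ℝ, Continuous fun a => φ t a := by
    intro t
    exact hc.comp (continuous_const.prodMk continuous_id)
  -- if fixed for one positive time, fixed forever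
  have fix_of_pos : ∀ (a) (u : ℝ), 0 < u → φ u a = a → a ∈ Fs := by
    intro a u hu hua
    have hnat : ∀ m : ℕ, φ (m * u) a = a := by
      intro m; induction m with
      | zero => simpa using h0 a
      | succ m ih =>
        have : ((m : ℝ) + 1) * u = u + m * u := by ring
        rw [Nat.cast_succ, this, hA, ih, hua]
    have hpos : ∀ r : ℝ, 0 ≤ r → φ r a = a := by
      intro r hr
      obtain ⟨m, hmr⟩ := exists_nat_ge (r / u)
      have hrm : r ≤ m * u := by
        rw [div_le_iff₀ hu] at hmr; linarith
      have h1 : a ≤ φ r a := hm a r hr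
      have h2 : φ r a ≤ φ (m * u) a := htmono a r _ hrm
      rw [hnat m] at h2
      exact le_antisymm h2 h1
    intro r
    rcases le_or_gt 0 r with h | h
    · exact hpos r h
    · have h1 : φ (-r) a = a := hpos (-r) (by linarith)
      have := hinv' r a
      rw [h1] at this
      exact this
  -- barriers at fixed points
  have barrier_le : ∀ c ∈ Fs, ∀ (a) (t : ℝ), a ≤ c → φ t a ≤ c := by
    intro c hcF a t hac
    rcases le_or_gt t 0 with ht | ht
    · have := htmono a t 0 ht; rw [h0] at this; exact this.trans hac
    · by_contra hlt
      push_neg at hlt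
      have hIVT := intermediate_value_Icc (le_of_lt ht) ((hcoR a).continuousOn)
      have hcmem : (c : ℝ) ∈ Icc ((φ 0 a : unitInterval) : ℝ) ((φ t a : unitInterval) : ℝ) := by
        constructor
        · rw [h0]; exact_mod_cast hac
        · exact_mod_cast hlt.le
      obtain ⟨s, _, hs⟩ := hIVT hcmem
      have hsc : φ s a = c := Subtype.ext hs
      have hac2 : a = c := by
        have := hinv s a; rw [hsc, hcF (-s)] at this; exact this.symm
      rw [hac2, hcF t] at hlt
      exact lt_irrefl _ hlt
  have barrier_ge : ∀ c ∈ Fs, ∀ (a) (t : ℝ), c ≤ a → c ≤ φ t a := by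
    intro c hcF a t hac
    rcases le_or_gt 0 t with ht | ht
    · exact hac.trans (hm a t ht)
    · by_contra hlt
      push_neg at hlt
      have hIVT := intermediate_value_Icc (le_of_lt ht) ((hcoR a).continuousOn)
      have hcmem : (c : ℝ) ∈ Icc ((φ t a : unitInterval) : ℝ) ((φ 0 a : unitInterval) : ℝ) := by
        constructor
        · exact_mod_cast hlt.le
        · rw [h0]; exact_mod_cast hac
      obtain ⟨s, _, hs⟩ := hIVT hcmem
      have hsc : φ s a = c := Subtype.ext hs
      have hac2 : a = c := by
        have := hinv s a; rw [hsc, hcF (-s)] at this; exact this.symm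
      rw [hac2, hcF t] at hlt
      exact lt_irrefl _ hlt
  -- 0 and 1 are fixed
  have zero_fix : (0 : unitInterval) ∈ Fs := by
    have hneg : ∀ t : ℝ, t ≤ 0 → φ t 0 = 0 := by
      intro t ht
      have h1 : φ t 0 ≤ φ 0 0 := htmono 0 t 0 ht
      rw [h0] at h1
      exact le_antisymm h1 (φ t 0).2.1
    intro t
    rcases le_or_gt t 0 with ht | ht
    · exact hneg t ht
    · have h1 : φ (-t) 0 = 0 := hneg (-t) (by linarith)
      have := hinv' t (0 : unitInterval)
      rw [h1] at this
      exact this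
  have one_fix : (1 : unitInterval) ∈ Fs := by
    have hpos : ∀ t : ℝ, 0 ≤ t → φ t 1 = 1 := by
      intro t ht
      exact le_antisymm (φ t 1).2.2 (hm 1 t ht)
    intro t
    rcases le_or_gt 0 t with ht | ht
    · exact hpos t ht
    · have h1 : φ (-t) 1 = 1 := hpos (-t) (by linarith)
      have := hinv' t (1 : unitInterval)
      rw [h1] at this
      exact this
  -- the finite set of fixed points
  set F : Finset unitInterval := hfin.toFinset with hF
  have hmemF : ∀ a, a ∈ F ↔ a ∈ Fs := fun a => hfin.mem_toFinset
  have hcard2 : 1 < F.card := by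
    refine Finset.one_lt_card.mpr ⟨0, (hmemF 0).mpr zero_fix, 1, (hmemF 1).mpr one_fix, ?_⟩
    intro h; simpa using congrArg Subtype.val h
  obtain ⟨n, hn, hcard⟩ : ∃ n, 0 < n ∧ F.card = n + 1 := by
    refine ⟨F.card - 1, by omega, by omega⟩
  set c : Fin (n + 1) ≃o F := F.orderIsoOfFin hcard with hcdef
  have cmemFs : ∀ j, ((c j : unitInterval)) ∈ Fs := fun j => (hmemF _).mp (c j).2
  have clt : ∀ {j j' : Fin (n + 1)}, j < j' → ((c j : unitInterval)) < c j' := by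
    intro j j' h; exact_mod_cast c.lt_iff_lt.mpr h
  have cle : ∀ {j j' : Fin (n + 1)}, j ≤ j' → ((c j : unitInterval)) ≤ c j' := by
    intro j j' h; exact_mod_cast c.le_iff_le.mpr h
  have clt_iff : ∀ {j j' : Fin (n + 1)}, ((c j : unitInterval)) < c j' ↔ j < j' := by
    intro j j'
    constructor
    · intro h; exact c.lt_iff_lt.mp (by exact_mod_cast h)
    · exact clt
  have csurj : ∀ a ∈ Fs, ∃ j, ((c j : unitInterval)) = a := by
    intro a ha
    exact ⟨c.symm ⟨a, (hmemF a).mpr ha⟩, by simp⟩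
  -- c 0 = 0 and c last = 1
  have c0 : ((c 0 : unitInterval)) = 0 := by
    obtain ⟨j, hj⟩ := csurj 0 zero_fix
    have h1 : ((c 0 : unitInterval)) ≤ c j := cle (Fin.zero_le j)
    rw [hj] at h1
    exact le_antisymm h1 (c 0 : unitInterval).2.1
  have clast : ((c (Fin.last n) : unitInterval)) = 1 := by
    obtain ⟨j, hj⟩ := csurj 1 one_fix
    have h1 : ((c j : unitInterval)) ≤ c (Fin.last n) := cle (Fin.le_last j)
    rw [hj] at h1
    exact le_antisymm (c (Fin.last n) : unitInterval).2.2 h1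
  set lo : Fin n → unitInterval := fun k => (c k.castSucc : unitInterval) with hlo
  set hi : Fin n → unitInterval := fun k => (c k.succ : unitInterval) with hhi
  have hlh : ∀ k, lo k < hi k := fun k => clt (Fin.castSucc_lt_succ : k.castSucc < k.succ)
  have loFs : ∀ k, lo k ∈ Fs := fun k => cmemFs _
  have hiFs : ∀ k, hi k ∈ Fs := fun k => cmemFs _
  -- no fixed point strictly between lo k and hi k
  have nofix_between : ∀ (k : Fin n) (a), a ∈ Fs → ¬(lo k < a ∧ a < hi k) := by
    rintro k a ha ⟨h1, h2⟩
    obtain ⟨j, hj⟩ := csurj a ha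
    rw [← hj] at h1 h2
    have hj1 : k.castSucc < j := clt_iff.mp h1
    have hj2 : j < k.succ := clt_iff.mp h2
    simp only [Fin.lt_def, Fin.coe_castSucc, Fin.val_succ] at hj1 hj2
    omega
  -- every non-fixed point lies strictly between two consecutive fixed points
  have locate : ∀ a : unitInterval, a ∉ Fs → ∃ k : Fin n, lo k < a ∧ a < hi k := by
    intro a ha
    have ha0 : 0 < a := by
      rcases eq_or_lt_of_le (show (0:unitInterval) ≤ a from a.2.1) with h | h
      · exact absurd (by rw [← h]; exact zero_fix) ha
      · exact h
    have ha1 : a < 1 := by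
      rcases eq_or_lt_of_le (show a ≤ (1:unitInterval) from a.2.2) with h | h
      · exact absurd (by rw [h]; exact one_fix) ha
      · exact h
    set J : Finset (Fin (n + 1)) := Finset.univ.filter (fun j => (c j : unitInterval) < a) with hJ
    have hJne : J.Nonempty := ⟨0, by simp [hJ, c0, ha0]⟩
    set j := J.max' hJne with hjdef
    have hjJ : j ∈ J := J.max'_mem hJne
    have hja : (c j : unitInterval) < a := by
      simpa [hJ] using hjJ
    have hjn : (j : ℕ) < n := by
      by_contra h
      have hj : j = Fin.last n := by
        apply Fin.ext
        have := j.isLt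
        simp only [Fin.val_last]
        omega
      rw [hj, clast] at hja
      exact absurd (hja.trans_le a.2.2) (lt_irrefl _)
    refine ⟨⟨(j : ℕ), hjn⟩, ?_, ?_⟩
    · have : (⟨(j : ℕ), hjn⟩ : Fin n).castSucc = j := by
        apply Fin.ext; simp
      rw [hlo]; simpa [this] using hja
    · by_contra h
      push_neg at h
      have hne : hi ⟨(j : ℕ), hjn⟩ ≠ a := fun he => ha (he ▸ hiFs _)
      have hlt : hi ⟨(j : ℕ), hjn⟩ < a := lt_of_le_of_ne h hne
      have hmem : (⟨(j : ℕ), hjn⟩ : Fin n).succ ∈ J := by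
        simp only [hJ, Finset.mem_filter, Finset.mem_univ, true_and]
        exact hlt
      have := J.le_max' _ hmem
      rw [← hjdef] at this
      have : ((⟨(j : ℕ), hjn⟩ : Fin n).succ : ℕ) ≤ (j : ℕ) := this
      simp at this
  -- midpoints of the gaps
  have hbex : ∀ k : Fin n, ∃ b : unitInterval, lo k < b ∧ b < hi k := by
    intro k
    have hlt : ((lo k : ℝ)) < ((hi k : ℝ)) := hlh k
    have h0le : (0:ℝ) ≤ (lo k : ℝ) := (lo k).2.1
    have h1ge : ((hi k : ℝ)) ≤ 1 := (hi k).2.2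
    refine ⟨⟨((lo k : ℝ) + (hi k : ℝ)) / 2, by constructor <;> nlinarith⟩, ?_, ?_⟩
    · rw [← Subtype.coe_lt_coe]
      show ((lo k : ℝ)) < _
      linarith
    · rw [← Subtype.coe_lt_coe]
      show _ < ((hi k : ℝ))
      linarith
  choose b hb1 hb2 using hbex
  have bnotfix : ∀ k, b k ∉ Fs := fun k hk => nofix_between k (b k) hk ⟨hb1 k, hb2 k⟩
  -- the orbit of b k stays strictly between lo k and hi k
  have horb1 : ∀ (k) (t : ℝ), lo k < φ t (b k) := by
    intro k t
    have hle : lo k ≤ φ t (b k) := barrier_ge _ (loFs k) _ t (hb1 k).le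
    rcases eq_or_lt_of_le hle with h | h
    · exfalso
      have := hinv t (b k)
      rw [← h, loFs k (-t)] at this
      exact (lt_irrefl _ (this ▸ hb1 k))
    · exact h
  have horb2 : ∀ (k) (t : ℝ), φ t (b k) < hi k := by
    intro k t
    have hle : φ t (b k) ≤ hi k := barrier_le _ (hiFs k) _ t (hb2 k).le
    rcases eq_or_lt_of_le hle with h | h
    · exfalso
      have := hinv t (b k)
      rw [h, hiFs k (-t)] at this
      exact (lt_irrefl _ (this ▸ hb2 k))
    · exact h
  -- the orbit map is strictly monotone
  have hsm : ∀ k, StrictMono (fun t : ℝ => φ t (b k)) := by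
    intro k
    intro s t hst
    have hle : φ s (b k) ≤ φ t (b k) := htmono _ s t hst.le
    rcases eq_or_lt_of_le hle with h | h
    · exfalso
      have hfix2 : φ s (b k) ∈ Fs := by
        apply fix_of_pos _ (t - s) (by linarith)
        rw [← hA, sub_add_cancel, ← h]
      exact nofix_between k _ hfix2 ⟨horb1 k s, horb2 k s⟩
    · exact h
  -- the orbit map surjects onto the open interval
  have hos : ∀ (k) (a : unitInterval), lo k < a → a < hi k → ∃ t : ℝ, φ t (b k) = a := by
    intro k a hla hah
    rcases lt_trichotomy a (b k) with hab | hab | hab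
    · -- going backwards in time
      have key : ∃ t : ℝ, φ t (b k) ≤ a := by
        by_contra hkey
        push_neg at hkey
        set g : ℝ → ℝ := fun t => ((φ t (b k) : unitInterval) : ℝ) with hg
        have hgmono : Monotone g := fun s t hst => by
          exact_mod_cast htmono (b k) s t hst
        have hganti : Antitone fun t : ℝ => g (-t) := fun s t hst => hgmono (by linarith)
        have hbdd : BddBelow (range fun t : ℝ => g (-t)) := by
          refine ⟨(a : ℝ), ?_⟩
          rintro y ⟨t, rfl⟩
          exact_mod_cast (hkey (-t)).le
        have htend : Tendsto (fun t : ℝ => g (-t)) atTop (𝓝 (⨅ t : ℝ, g (-t))) :=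
          tendsto_atTop_ciInf hganti hbdd
        set S : ℝ := ⨅ t : ℝ, g (-t) with hS
        have hSa : (a : ℝ) ≤ S := by
          refine le_ciInf fun t => ?_
          exact_mod_cast (hkey (-t)).le
        have hSb : S ≤ (b k : ℝ) := by
          refine ciInf_le_of_le hbdd 0 ?_
          simp [hg, h0]
        have hSmem : S ∈ unitInterval := ⟨le_trans a.2.1 hSa, le_trans hSb (b k).2.2⟩
        set Sel : unitInterval := ⟨S, hSmem⟩ with hSel
        have h1 : Tendsto (fun t : ℝ => φ (-t) (b k)) atTop (𝓝 Sel) := by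
          rw [tendsto_subtype_rng]
          exact htend
        have hfixS : Sel ∈ Fs := by
          intro r
          have h2 : Tendsto (fun t : ℝ => φ r (φ (-t) (b k))) atTop (𝓝 (φ r Sel)) :=
            ((hcs r).tendsto Sel).comp h1
          have h3 : (fun t : ℝ => φ r (φ (-t) (b k))) = (fun t : ℝ => φ (-t) (b k)) ∘ (fun t : ℝ => t - r) := by
            funext t
            show φ r (φ (-t) (b k)) = φ (-(t - r)) (b k)
            rw [show -(t - r) = r + -t by ring, hA]
          have h4 : Tendsto ((fun t : ℝ => φ (-t) (b k)) ∘ (fun t : ℝ => t - r)) atTop (𝓝 Sel) := by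
            refine h1.comp ?_
            exact tendsto_atTop_add_const_right atTop (-r) tendsto_id
          rw [h3] at h2
          exact tendsto_nhds_unique h2 h4
        refine nofix_between k Sel hfixS ⟨?_, ?_⟩
        · exact lt_of_lt_of_le hla (by exact_mod_cast hSa)
        · exact lt_of_le_of_lt (show Sel ≤ b k by exact_mod_cast hSb) (hb2 k)
      obtain ⟨t0, ht0⟩ := key
      have ht0neg : t0 ≤ 0 := by
        by_contra h
        push_neg at h
        have := hm (b k) t0 h.le
        exact absurd ((this.trans ht0).trans_lt hab) (lt_irrefl _)
      have hIVT := intermediate_value_Icc ht0neg ((hcoR (b k)).continuousOn)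
      have hamem : (a : ℝ) ∈ Icc ((φ t0 (b k) : unitInterval) : ℝ) ((φ 0 (b k) : unitInterval) : ℝ) := by
        constructor
        · exact_mod_cast ht0
        · rw [h0]; exact_mod_cast hab.le
      obtain ⟨s, _, hs⟩ := hIVT hamem
      exact ⟨s, Subtype.ext hs⟩
    · exact ⟨0, by rw [h0, hab]⟩
    · -- going forwards in time
      have key : ∃ t : ℝ, a ≤ φ t (b k) := by
        by_contra hkey
        push_neg at hkey
        set g : ℝ → ℝ := fun t => ((φ t (b k) : unitInterval) : ℝ) with hg
        have hgmono : Monotone g := fun s t hst => by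
          exact_mod_cast htmono (b k) s t hst
        have hbdd : BddAbove (range g) := by
          refine ⟨(a : ℝ), ?_⟩
          rintro y ⟨t, rfl⟩
          exact_mod_cast (hkey t).le
        have htend : Tendsto g atTop (𝓝 (⨆ t, g t)) := tendsto_atTop_ciSup hgmono hbdd
        set S : ℝ := ⨆ t : ℝ, g t with hS
        have hSa : S ≤ (a : ℝ) := by
          apply ciSup_le
          intro t
          exact_mod_cast (hkey t).le
        have hSb : (b k : ℝ) ≤ S := by
          refine le_ciSup_of_le hbdd 0 ?_
          simp [hg, h0]
        have hSmem : S ∈ unitInterval := ⟨le_trans (b k).2.1 hSb, le_trans hSa a.2.2⟩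
        set Sel : unitInterval := ⟨S, hSmem⟩ with hSel
        have h1 : Tendsto (fun t : ℝ => φ t (b k)) atTop (𝓝 Sel) := by
          rw [tendsto_subtype_rng]
          exact htend
        have hfixS : Sel ∈ Fs := by
          intro r
          have h2 : Tendsto (fun t : ℝ => φ r (φ t (b k))) atTop (𝓝 (φ r Sel)) :=
            ((hcs r).tendsto Sel).comp h1
          have h3 : (fun t : ℝ => φ r (φ t (b k))) = fun t : ℝ => φ (r + t) (b k) := by
            funext t; rw [hA]
          have h4 : Tendsto (fun t : ℝ => φ (r + t) (b k)) atTop (𝓝 Sel) := by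
            have hshift : Tendsto (fun t : ℝ => r + t) atTop atTop :=
              tendsto_atTop_add_const_left atTop r tendsto_id
            exact h1.comp hshift
          rw [h3] at h2
          exact tendsto_nhds_unique h2 h4
        refine nofix_between k Sel hfixS ⟨?_, ?_⟩
        · exact lt_of_lt_of_le (hb1 k) (by exact_mod_cast hSb)
        · exact lt_of_le_of_lt (show Sel ≤ a by exact_mod_cast hSa) hah
      obtain ⟨t0, ht0⟩ := key
      have ht0pos : 0 ≤ t0 := by
        by_contra h
        push_neg at h
        have h1 : φ t0 (b k) ≤ φ 0 (b k) := htmono _ _ _ h.le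
        rw [h0] at h1
        exact absurd ((ht0.trans h1).trans_lt hab) (lt_irrefl _)
      have hIVT := intermediate_value_Icc ht0pos ((hcoR (b k)).continuousOn)
      have hamem : (a : ℝ) ∈ Icc ((φ 0 (b k) : unitInterval) : ℝ) ((φ t0 (b k) : unitInterval) : ℝ) := by
        constructor
        · rw [h0]; exact_mod_cast hab.le
        · exact_mod_cast ht0
      obtain ⟨s, _, hs⟩ := hIVT hamem
      exact ⟨s, Subtype.ext hs⟩
  -- time coordinates on each gap
  set tk : Fin n → unitInterval → ℝ := fun k => Function.invFun (fun t : ℝ => φ t (b k)) with htkdef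
  have htk : ∀ (k) (a), lo k < a → a < hi k → φ (tk k a) (b k) = a := by
    intro k a h1 h2
    exact Function.invFun_eq (hos k a h1 h2)
  have htk2 : ∀ (k) (t : ℝ), tk k (φ t (b k)) = t := by
    intro k t
    exact (hsm k).injective (htk k _ (horb1 k t) (horb2 k t))
  -- the coordinate functions
  set f : Fin n → unitInterval → EReal :=
    fun k a => if a ≤ lo k then ⊥ else if hi k ≤ a then ⊤ else ((tk k a : ℝ) : EReal) with hfdef
  have fbot : ∀ (k) (a), a ≤ lo k → f k a = ⊥ := by
    intro k a h; simp only [hfdef]; rw [if_pos h]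
  have ftop : ∀ (k) (a), ¬ a ≤ lo k → hi k ≤ a → f k a = ⊤ := by
    intro k a h1 h2; simp only [hfdef]; rw [if_neg h1, if_pos h2]
  have fmid : ∀ (k) (a), lo k < a → a < hi k → f k a = ((tk k a : ℝ) : EReal) := by
    intro k a h1 h2; simp only [hfdef]
    rw [if_neg (not_le.mpr h1), if_neg (not_le.mpr h2)]
  have fne_bot : ∀ (k) (a), lo k < a → f k a ≠ ⊥ := by
    intro k a h1
    by_cases h2 : hi k ≤ a
    · rw [ftop k a (not_le.mpr h1) h2]; exact top_ne_bot
    · rw [fmid k a h1 (not_le.mp h2)]; exact EReal.coe_ne_bot _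
  have fne_top : ∀ (k) (a), a < hi k → f k a ≠ ⊤ := by
    intro k a h2
    by_cases h1 : a ≤ lo k
    · rw [fbot k a h1]; exact bot_ne_top
    · rw [fmid k a (not_le.mp h1) h2]; exact EReal.coe_ne_top _
  -- monotonicity of the coordinates
  have fmono : ∀ k, Monotone (f k) := by
    intro k a a' haa'
    by_cases h1 : a ≤ lo k
    · rw [fbot k a h1]; exact bot_le
    by_cases h2 : hi k ≤ a
    · rw [ftop k a h1 h2, ftop k a' (not_le.mpr ((hlh k).trans_le (h2.trans haa'))) (h2.trans haa')]
    have h1' : lo k < a := not_le.mp h1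
    have h2' : a < hi k := not_le.mp h2
    rw [fmid k a h1' h2']
    by_cases h3 : hi k ≤ a'
    · rw [ftop k a' (not_le.mpr (h1'.trans_le haa')) h3]; exact le_top
    rw [fmid k a' (h1'.trans_le haa') (not_le.mp h3)]
    have : tk k a ≤ tk k a' := by
      apply (hsm k).le_iff_le.mp
      show φ (tk k a) (b k) ≤ φ (tk k a') (b k)
      rw [htk k a h1' h2', htk k a' (h1'.trans_le haa') (not_le.mp h3)]
      exact haa'
    exact_mod_cast this
  -- equivariance of the coordinates
  have hfeq : ∀ (k) (t : ℝ) (a), f k (φ t a) = f k a + (t : EReal) := by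
    intro k t a
    by_cases h1 : a ≤ lo k
    · rw [fbot k a h1, fbot k _ (barrier_le _ (loFs k) a t h1), EReal.bot_add]
    by_cases h2 : hi k ≤ a
    · have h2' : hi k ≤ φ t a := barrier_ge _ (hiFs k) a t h2
      rw [ftop k a h1 h2, ftop k _ (not_le.mpr ((hlh k).trans_le h2')) h2', EReal.top_add_coe]
    have h1' : lo k < a := not_le.mp h1
    have h2' : a < hi k := not_le.mp h2
    have h1p : lo k < φ t a := by
      by_contra h
      push_neg at h
      have := barrier_le _ (loFs k) (φ t a) (-t) h
      rw [hinv] at this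
      exact h1 this
    have h2p : φ t a < hi k := by
      by_contra h
      push_neg at h
      have := barrier_ge _ (hiFs k) (φ t a) (-t) h
      rw [hinv] at this
      exact h2 this
    rw [fmid k a h1' h2', fmid k _ h1p h2p, ← EReal.coe_add]
    congr 1
    apply (hsm k).injective
    show φ (tk k (φ t a)) (b k) = φ (tk k a + t) (b k)
    rw [htk k _ h1p h2p, add_comm, hA, htk k a h1' h2']
  -- the tuple of coordinates lands in the model
  have hEmem : ∀ a, (fun k => f k a) ∈ ConcatModel n := by
    intro a i j hij hbj
    have hja : lo j < a := by
      by_contra h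
      exact hbj (fbot j a (not_lt.mp h))
    have hhij : hi i ≤ lo j := by
      apply cle
      simp only [Fin.le_def, Fin.val_succ, Fin.coe_castSucc]
      exact hij
    exact ftop i a (not_le.mpr ((hlh i).trans_le (hhij.trans hja.le))) (hhij.trans hja.le)
  set E : unitInterval → ConcatModel n := fun a => ⟨fun k => f k a, hEmem a⟩ with hEdef
  -- continuity of the coordinates
  have hpr : ∀ a : unitInterval, Set.projIcc (0:ℝ) 1 zero_le_one (a : ℝ) = a := by
    intro a; simp
  have fcont : ∀ k, Continuous (f k) := by
    intro k
    set g : ℝ → EReal := (f k) ∘ (Set.projIcc (0:ℝ) 1 zero_le_one) with hgdef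
    have gmono : Monotone g := (fmono k).comp (monotone_projIcc zero_le_one)
    have gsurj : Function.Surjective g := by
      intro y
      induction y using EReal.rec with
      | bot =>
        exact ⟨(lo k : ℝ), by simp only [hgdef, Function.comp_apply, hpr]; exact fbot k _ le_rfl⟩
      | top =>
        refine ⟨(hi k : ℝ), by simp only [hgdef, Function.comp_apply, hpr]; exact ftop k _ (not_le.mpr (hlh k)) le_rfl⟩
      | coe r =>
        refine ⟨((φ r (b k) : unitInterval) : ℝ), ?_⟩
        simp only [hgdef, Function.comp_apply, hpr]
        rw [fmid k _ (horb1 k r) (horb2 k r), htk2 k r]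
    have gcont : Continuous g := gmono.continuous_of_surjective gsurj
    have : f k = g ∘ (Subtype.val) := by
      funext a
      simp only [hgdef, Function.comp_apply, hpr]
    rw [this]
    exact gcont.comp continuous_subtype_val
  have Econt : Continuous E := Continuous.subtype_mk (continuous_pi fcont) _
  -- injectivity
  have Elt : ∀ a a', a < a' → E a ≠ E a' := by
    intro a a' hlt hEE
    have hEE' : ∀ k, f k a = f k a' := fun k => congrFun (congrArg Subtype.val hEE) k
    by_cases hcase1 : ∃ j : Fin (n+1), a ≤ (c j : unitInterval) ∧ ((c j : unitInterval)) < a'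
    · obtain ⟨j, hj1, hj2⟩ := hcase1
      have hjlt : j < Fin.last n := clt_iff.mp (by rw [clast]; exact lt_of_lt_of_le hj2 a'.2.2)
      have hjn : (j : ℕ) < n := by simpa [Fin.lt_def] using hjlt
      set k : Fin n := ⟨(j : ℕ), hjn⟩ with hkdef
      have hcast : k.castSucc = j := by apply Fin.ext; simp [hkdef]
      have hlok : lo k = (c j : unitInterval) := by rw [hlo]; simp only; rw [hcast]
      have h1 := hEE' k
      rw [fbot k a (by rw [hlok]; exact hj1)] at h1
      exact fne_bot k a' (by rw [hlok]; exact hj2) h1.symm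
    by_cases hcase2 : ∃ j : Fin (n+1), ((c j : unitInterval)) ≤ a' ∧ a < (c j : unitInterval)
    · obtain ⟨j, hj1, hj2⟩ := hcase2
      have hjgt : (0 : Fin (n+1)) < j := clt_iff.mp (by rw [c0]; exact lt_of_le_of_lt a.2.1 hj2)
      have hjpos : 0 < (j : ℕ) := by have := Fin.lt_def.mp hjgt; rw [Fin.val_zero] at this; exact this
      set k : Fin n := ⟨(j : ℕ) - 1, by omega⟩ with hkdef
      have hsucc : k.succ = j := by
        apply Fin.ext; simp only [Fin.val_succ, hkdef]; omega
      have hhik : hi k = (c j : unitInterval) := by rw [hhi]; simp only; rw [hsucc]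
      have h1 := hEE' k
      rw [ftop k a' (not_le.mpr ((hlh k).trans_le (by rw [hhik]; exact hj1))) (by rw [hhik]; exact hj1)] at h1
      exact fne_top k a (by rw [hhik]; exact hj2) h1
    · have haF : a ∉ Fs := by
        intro hf
        obtain ⟨j, hj⟩ := csurj a hf
        exact hcase1 ⟨j, le_of_eq hj.symm, by rw [hj]; exact hlt⟩
      obtain ⟨k, hk1, hk2⟩ := locate a haF
      have ha'lt : a' < hi k := by
        by_contra h
        push_neg at h
        exact hcase2 ⟨k.succ, h, hk2⟩
      have h1 := hEE' k
      rw [fmid k a hk1 hk2, fmid k a' (hk1.trans hlt) ha'lt] at h1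
      have h2 : tk k a = tk k a' := by exact_mod_cast h1
      apply hlt.ne
      rw [← htk k a hk1 hk2, ← htk k a' (hk1.trans hlt) ha'lt, h2]
  have Einj : Function.Injective E := by
    intro a a' h
    rcases lt_trichotomy a a' with hlt | heq | hgt
    · exact absurd h (Elt a a' hlt)
    · exact heq
    · exact absurd h.symm (Elt a' a hgt)
  -- surjectivity
  have Esurj : Function.Surjective E := by
    rintro ⟨β, hβ⟩
    by_cases hall : ∀ i, β i = ⊤
    · refine ⟨1, Subtype.ext (funext fun k => ?_)⟩
      show f k 1 = β k
      rw [hall k]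
      apply ftop
      · apply not_le.mpr
        calc lo k < hi k := hlh k
          _ ≤ 1 := (hi k).2.2
      · exact (hi k).2.2
    · push_neg at hall
      obtain ⟨iw, hiw⟩ := hall
      obtain ⟨i0, hi0mem, hi0min⟩ :=
        Finset.exists_min_image (Finset.univ.filter (fun i => β i ≠ ⊤)) id ⟨iw, by simp [hiw]⟩
      have hi0 : β i0 ≠ ⊤ := by simpa using hi0mem
      have hmin : ∀ i, i < i0 → β i = ⊤ := by
        intro i hilt
        by_contra h
        exact absurd (hi0min i (by simp [h])) (not_le.mpr hilt)
      have hbot : ∀ j, i0 < j → β j = ⊥ := by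
        intro j hj
        by_contra h
        exact hi0 (hβ i0 j hj h)
      have hi_le_lo : ∀ k : Fin n, k < i0 → hi k ≤ lo i0 := by
        intro k hk
        apply cle
        simp only [Fin.le_def, Fin.val_succ, Fin.coe_castSucc]
        exact hk
      have lo_le_lo : ∀ k : Fin n, i0 ≤ k → lo i0 ≤ lo k := by
        intro k hk
        apply cle
        simp only [Fin.le_def, Fin.coe_castSucc]
        exact hk
      have hi0_le_lo : ∀ k : Fin n, i0 < k → hi i0 ≤ lo k := by
        intro k hk
        apply cle
        simp only [Fin.le_def, Fin.val_succ, Fin.coe_castSucc]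
        exact hk
      have htri0 : ∀ v : EReal, v = ⊥ ∨ (∃ r : ℝ, v = (r : EReal)) ∨ v = ⊤ := by
        intro v
        induction v using EReal.rec with
        | bot => exact Or.inl rfl
        | coe r => exact Or.inr (Or.inl ⟨r, rfl⟩)
        | top => exact Or.inr (Or.inr rfl)
      rcases htri0 (β i0) with hv | ⟨r, hv⟩ | hv
      rotate_right
      · exact absurd hv hi0
      · refine ⟨lo i0, Subtype.ext (funext fun k => ?_)⟩
        show f k (lo i0) = β k
        rcases lt_trichotomy k i0 with hk | hk | hk
        · rw [hmin k hk]
          exact ftop k _ (not_le.mpr ((hlh k).trans_le (hi_le_lo k hk))) (hi_le_lo k hk)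
        · rw [hk, hv]
          exact fbot i0 _ le_rfl
        · rw [hbot k hk]
          exact fbot k _ (lo_le_lo k hk.le)
      · refine ⟨φ r (b i0), Subtype.ext (funext fun k => ?_)⟩
        show f k (φ r (b i0)) = β k
        rcases lt_trichotomy k i0 with hk | hk | hk
        · rw [hmin k hk]
          have hle : hi k ≤ φ r (b i0) := (hi_le_lo k hk).trans (horb1 i0 r).le
          exact ftop k _ (not_le.mpr ((hlh k).trans_le hle)) hle
        · rw [hk, hv]
          rw [fmid i0 _ (horb1 i0 r) (horb2 i0 r), htk2 i0 r]
        · rw [hbot k hk]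
          exact fbot k _ ((horb2 i0 r).le.trans (hi0_le_lo k hk))
  -- assemble the homeomorphism
  have hT2 : T2Space (ConcatModel n) := by infer_instance
  set Eequiv : unitInterval ≃ ConcatModel n := Equiv.ofBijective E ⟨Einj, Esurj⟩ with hEq
  have EequivCont : Continuous Eequiv := Econt
  set eh : unitInterval ≃ₜ ConcatModel n := EequivCont.homeoOfEquivCompactToT2 with hehdef
  refine ⟨n, hn, eh, ?_, ?_⟩
  · intro t a i
    show f i (φ t a) = f i a + (t : EReal)
    exact hfeq i t a
  · refine ⟨fun k => {x : unitInterval | lo k < x ∧ x < hi k}, ?_, ?_, ?_, ?_⟩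
    · intro k
      show IsPreconnected {x : unitInterval | lo k < x ∧ x < hi k}
      have himg : {x : unitInterval | lo k < x ∧ x < hi k} =
          (Set.projIcc (0:ℝ) 1 zero_le_one) '' (Ioo (lo k : ℝ) (hi k : ℝ)) := by
        ext x
        constructor
        · rintro ⟨h1, h2⟩
          exact ⟨(x : ℝ), ⟨by exact_mod_cast h1, by exact_mod_cast h2⟩, hpr x⟩
        · rintro ⟨rr, hrr, rfl⟩
          have hrmem : rr ∈ Icc (0:ℝ) 1 := ⟨(lo k).2.1.trans hrr.1.le, hrr.2.le.trans (hi k).2.2⟩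
          rw [Set.projIcc_of_mem zero_le_one hrmem]
          constructor
          · exact_mod_cast hrr.1
          · exact_mod_cast hrr.2
      rw [himg]
      exact isPreconnected_Ioo.image _ (continuous_projIcc.continuousOn)
    · exact fun k => ⟨b k, hb1 k, hb2 k⟩
    · intro k a ha
      exact fun hf => nofix_between k a hf ha
    · intro a ha
      exact locate a ha



/-- Every broken line is isomorphic, via an `ℝ`-equivariant homeomorphism, to a
concatenation of finitely many (`n ≥ 1`) copies of `[-∞,∞]` with its translation
action; in particular the set of connected components of the non-fixed locus is
finite and nonempty. -/
theorem brokenLine_classification {X : Type} [TopologicalSpace X] (μ : ℝ → X → X)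
    (hcont : Continuous fun p : ℝ × X => μ p.1 p.2)
    (hzero : ∀ x, μ 0 x = x)
    (hadd : ∀ s t x, μ (s + t) x = μ s (μ t x))
    (hdir : ∃ γ : X ≃ₜ unitInterval, ∀ (x : X) (t : ℝ), 0 ≤ t → γ x ≤ γ (μ t x))
    (hfix : {x : X | ∀ t : ℝ, μ t x = x}.Finite) :
    (∃ (n : ℕ) (_ : 0 < n) (e : X ≃ₜ ConcatModel n),
      ∀ (t : ℝ) (x : X) (i : Fin n), (e (μ t x)).1 i = (e x).1 i + (t : EReal)) ∧
    Finite (ConnectedComponents {x : X // ¬ ∀ t : ℝ, μ t x = x}) ∧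
    Nonempty (ConnectedComponents {x : X // ¬ ∀ t : ℝ, μ t x = x}) := by
  classical
  obtain ⟨γ, hγ⟩ := hdir
  set φ : ℝ → unitInterval → unitInterval := fun t a => γ (μ t (γ.symm a)) with hφ
  have hφγ : ∀ (t : ℝ) (x : X), φ t (γ x) = γ (μ t x) := by
    intro t x; simp [hφ]
  have hc : Continuous fun p : ℝ × unitInterval => φ p.1 p.2 := by
    apply γ.continuous.comp
    exact hcont.comp (continuous_fst.prodMk (γ.symm.continuous.comp continuous_snd))
  have h0 : ∀ a, φ 0 a = a := by intro a; simp [hφ, hzero]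
  have hA : ∀ s t a, φ (s + t) a = φ s (φ t a) := by
    intro s t a; simp [hφ, hadd]
  have hm : ∀ (a : unitInterval) (t : ℝ), 0 ≤ t → a ≤ φ t a := by
    intro a t ht
    have := hγ (γ.symm a) t ht
    simpa [hφ] using this
  have hfixtrans : ∀ x : X, (∀ t, μ t x = x) ↔ (∀ t, φ t (γ x) = γ x) := by
    intro x
    constructor
    · intro h t; rw [hφγ, h t]
    · intro h t
      have := h t
      rw [hφγ] at this
      exact γ.injective this
  have hfix2 : {a : unitInterval | ∀ t, φ t a = a}.Finite := by
    have hset : {a : unitInterval | ∀ t, φ t a = a} =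
        γ.symm ⁻¹' {x : X | ∀ t : ℝ, μ t x = x} := by
      ext a
      have := hfixtrans (γ.symm a)
      simp only [mem_setOf_eq, mem_preimage]
      rw [this]
      simp
    rw [hset]
    exact hfix.preimage (γ.symm.injective.injOn)
  obtain ⟨n, hn, eI, heq, U, hU1, hU2, hU3, hU4⟩ := brokenLine_aux φ hc h0 hA hm hfix2
  constructor
  · refine ⟨n, hn, γ.trans eI, ?_⟩
    intro t x i
    show (eI (γ (μ t x))).1 i = (eI (γ x)).1 i + (t : EReal)
    rw [← hφγ]
    exact heq t (γ x) i
  · set S := {x : X // ¬ ∀ t : ℝ, μ t x = x} with hS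
    set V : Fin n → Set S := fun k => {s : S | γ s.1 ∈ U k} with hV
    have hVpre : ∀ k, IsPreconnected (V k) := by
      intro k
      have h1 : (Subtype.val '' V k : Set X) = γ.symm '' U k := by
        ext x
        constructor
        · rintro ⟨s, hs, rfl⟩
          exact ⟨γ s.1, hs, by simp⟩
        · rintro ⟨u, hu, rfl⟩
          have hnfix : ¬ ∀ t : ℝ, μ t (γ.symm u) = γ.symm u := by
            rw [hfixtrans]
            simp only [Homeomorph.apply_symm_apply]
            exact hU3 k u hu
          exact ⟨⟨γ.symm u, hnfix⟩, by show γ (γ.symm u) ∈ U k; simpa using hu, rfl⟩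
      have h2 : IsPreconnected (γ.symm '' U k) :=
        (hU1 k).image _ γ.symm.continuous.continuousOn
      rw [← h1] at h2
      exact (Topology.IsInducing.subtypeVal).isPreconnected_image.mp h2
    have hrep : ∀ k : Fin n, ∃ s : S, s ∈ V k := by
      intro k
      obtain ⟨u, hu⟩ := hU2 k
      have hnfix : ¬ ∀ t : ℝ, μ t (γ.symm u) = γ.symm u := by
        rw [hfixtrans]
        simp only [Homeomorph.apply_symm_apply]
        exact hU3 k u hu
      exact ⟨⟨γ.symm u, hnfix⟩, by simpa [hV] using hu⟩
    choose rep hrepV using hrep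
    set g : Fin n → ConnectedComponents S := fun k => ConnectedComponents.mk (rep k) with hg
    have hgsurj : Function.Surjective g := by
      intro cc
      obtain ⟨s, rfl⟩ := ConnectedComponents.surjective_coe cc
      have hsn : ¬ ∀ t : ℝ, φ t (γ s.1) = γ s.1 := by
        rw [← hfixtrans]
        exact s.2
      obtain ⟨k, hk⟩ := hU4 (γ s.1) hsn
      have hsV : s ∈ V k := hk
      refine ⟨k, ?_⟩
      have hsub : V k ⊆ connectedComponent (rep k) :=
        (hVpre k).subset_connectedComponent (hrepV k)
      have : s ∈ connectedComponent (rep k) := hsub hsV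
      exact ConnectedComponents.coe_eq_coe.mpr (connectedComponent_eq this)
    constructor
    · exact Finite.of_surjective g hgsurj
    · exact ⟨g ⟨0, hn⟩⟩
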